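/- arXiv:1407.7483 — 11 statements merged into one kernel-verified Lean document; each statement's English description precedes it below -/
import Mathlib

section
/- Let S be an ordered semigroup, X a subset of S, and Q := (X ∪ ((XS] ∩ (SX])]. Then (QS] ⊆ (XS] and (SQ] ⊆ (SX]. -/
open Pointwise

/-- The "downward closure" `(A] = {t | t ≤ a for some a ∈ A}`. -/
def dcl {S : Type*} [LE S] (A : Set S) : Set S := {t | ∃ a ∈ A, t ≤ a}

/-- For `Q = (X ∪ ((XS] ∩ (SX])]`, we have `(QS] ⊆ (XS]` and `(SQ] ⊆ (SX]`. -/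
theorem Q_prod_subsets {S : Type*} [Semigroup S] [PartialOrder S]
    [CovariantClass S S (· * ·) (· ≤ ·)]
    [CovariantClass S S (Function.swap (· * ·)) (· ≤ ·)]
    (X : Set S) (Q : Set S)
    (hQ : Q = dcl (X ∪ (dcl (X * Set.univ) ∩ dcl (Set.univ * X)))) :
    dcl (Q * Set.univ) ⊆ dcl (X * Set.univ) ∧
    dcl (Set.univ * Q) ⊆ dcl (Set.univ * X) := by
  subst hQ
  constructor
  · rintro t ⟨p, ⟨q, ⟨a, ha, hqa⟩, s, -, rfl⟩, htp⟩
    rcases ha with hx | ⟨⟨b, ⟨x, hx, u, -, rfl⟩, hab⟩, -⟩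
    · exact ⟨a * s, ⟨a, hx, s, trivial, rfl⟩,
        htp.trans (mul_le_mul_left hqa s)⟩
    · refine ⟨x * (u * s), ⟨x, hx, u * s, trivial, rfl⟩, ?_⟩
      calc t ≤ q * s := htp
        _ ≤ a * s := mul_le_mul_left hqa s
        _ ≤ (x * u) * s := mul_le_mul_left hab s
        _ = x * (u * s) := mul_assoc ..
  · rintro t ⟨p, ⟨s, -, q, ⟨a, ha, hqa⟩, rfl⟩, htp⟩
    rcases ha with hx | ⟨-, ⟨b, ⟨u, -, x, hx, rfl⟩, hab⟩⟩
    · exact ⟨s * a, ⟨s, trivial, a, hx, rfl⟩,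
        htp.trans (mul_le_mul_right hqa s)⟩
    · refine ⟨(s * u) * x, ⟨s * u, trivial, x, hx, rfl⟩, ?_⟩
      calc t ≤ s * q := htp
        _ ≤ s * a := mul_le_mul_right hqa s
        _ ≤ s * (u * x) := mul_le_mul_right hab s
        _ = (s * u) * x := (mul_assoc ..).symm
end

section
/- Let S be an ordered semigroup, X a subset of S, and Q := (X ∪ ((XS] ∩ (SX])]. Then (QS] ∩ (SQ] ⊆ Q. -/
open Pointwise

/-- For `Q = (X ∪ ((XS] ∩ (SX])]`, we have `(QS] ∩ (SQ] ⊆ Q`. -/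
theorem Q_quasi_property {S : Type*} [Semigroup S] [PartialOrder S]
    [CovariantClass S S (· * ·) (· ≤ ·)]
    [CovariantClass S S (Function.swap (· * ·)) (· ≤ ·)]
    (X : Set S) (Q : Set S)
    (hQ : Q = dcl (X ∪ (dcl (X * Set.univ) ∩ dcl (Set.univ * X)))) :
    dcl (Q * Set.univ) ∩ dcl (Set.univ * Q) ⊆ Q := by
  subst hQ
  rintro t ⟨⟨p, hp, htp⟩, ⟨p', hp', htp'⟩⟩
  refine ⟨t, Or.inr ⟨?_, ?_⟩, le_refl t⟩
  · -- t ∈ dcl (X * univ)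
    obtain ⟨q, hq, s, -, rfl⟩ := hp
    obtain ⟨a, ha, hqa⟩ := hq
    rcases ha with hX | ⟨⟨x, ⟨y, hy, u, -, rfl⟩, hax⟩, -⟩
    · exact ⟨a * s, ⟨a, hX, s, trivial, rfl⟩,
        le_trans htp (mul_le_mul_left hqa s)⟩
    · exact ⟨y * (u * s), ⟨y, hy, u * s, trivial, rfl⟩,
        le_trans htp (le_trans (mul_le_mul_left hqa s)
          (le_of_le_of_eq (mul_le_mul_left hax s) (mul_assoc y u s)))⟩
  · -- t ∈ dcl (univ * X)
    obtain ⟨s, -, q, hq, rfl⟩ := hp'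
    obtain ⟨a, ha, hqa⟩ := hq
    rcases ha with hX | ⟨-, ⟨x, ⟨u, -, y, hy, rfl⟩, hax⟩⟩
    · exact ⟨s * a, ⟨s, trivial, a, hX, rfl⟩,
        le_trans htp' (mul_le_mul_right hqa s)⟩
    · exact ⟨(s * u) * y, ⟨s * u, trivial, y, hy, rfl⟩,
        le_trans htp' (le_trans (mul_le_mul_right hqa s)
          (le_of_le_of_eq (mul_le_mul_right hax s) (mul_assoc s u y).symm))⟩
end

section
/- Let S be an ordered semigroup and X a nonempty subset of S. Then the set Q := (X ∪ ((XS] ∩ (SX])] is the quasi-ideal of S generated by X; that is, Q is a quasi-ideal of S, X ⊆ Q, and for every quasi-ideal T of S with X ⊆ T one has Q ⊆ T. -/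
open Pointwise

/-- `Q = (X ∪ ((XS] ∩ (SX])]` is the quasi-ideal of S generated by X. -/
theorem Q_is_quasi_ideal_generated {S : Type*} [Semigroup S] [PartialOrder S]
    [CovariantClass S S (· * ·) (· ≤ ·)]
    [CovariantClass S S (Function.swap (· * ·)) (· ≤ ·)]
    (X : Set S) (hX : X.Nonempty) (Q : Set S)
    (hQ : Q = dcl (X ∪ (dcl (X * Set.univ) ∩ dcl (Set.univ * X)))) :
    (Q.Nonempty ∧ dcl (Q * Set.univ) ∩ dcl (Set.univ * Q) ⊆ Q ∧ dcl Q ⊆ Q) ∧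
    X ⊆ Q ∧
    (∀ T : Set S, T.Nonempty →
      dcl (T * Set.univ) ∩ dcl (Set.univ * T) ⊆ T → dcl T ⊆ T →
      X ⊆ T → Q ⊆ T) := by
  subst hQ
  have hsub : X ⊆ dcl (X ∪ (dcl (X * Set.univ) ∩ dcl (Set.univ * X))) :=
    fun x hx => ⟨x, Or.inl hx, le_refl x⟩
  refine ⟨⟨hX.mono hsub, ?_, ?_⟩, hsub, ?_⟩
  · rintro t ⟨⟨a, ha, hta⟩, ⟨b, hb, htb⟩⟩
    refine ⟨t, Or.inr ⟨?_, ?_⟩, le_refl t⟩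
    · obtain ⟨q, hq, s, -, rfl⟩ := Set.mem_mul.mp ha
      obtain ⟨c, hc, hqc⟩ := hq
      rcases hc with hc | ⟨⟨u, hu, hcu⟩, -⟩
      · exact ⟨c * s, Set.mul_mem_mul hc (Set.mem_univ s),
          hta.trans (mul_le_mul_left hqc s)⟩
      · obtain ⟨x, hx, v, -, rfl⟩ := Set.mem_mul.mp hu
        refine ⟨x * (v * s), Set.mul_mem_mul hx (Set.mem_univ _), ?_⟩
        calc t ≤ q * s := hta
          _ ≤ c * s := mul_le_mul_left hqc s
          _ ≤ (x * v) * s := mul_le_mul_left hcu s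
          _ = x * (v * s) := mul_assoc ..
    · obtain ⟨s, -, q, hq, rfl⟩ := Set.mem_mul.mp hb
      obtain ⟨c, hc, hqc⟩ := hq
      rcases hc with hc | ⟨-, ⟨u, hu, hcu⟩⟩
      · exact ⟨s * c, Set.mul_mem_mul (Set.mem_univ s) hc,
          htb.trans (mul_le_mul_right hqc s)⟩
      · obtain ⟨v, -, x, hx, rfl⟩ := Set.mem_mul.mp hu
        refine ⟨(s * v) * x, Set.mul_mem_mul (Set.mem_univ _) hx, ?_⟩
        calc t ≤ s * q := htb
          _ ≤ s * c := mul_le_mul_right hqc s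
          _ ≤ s * (v * x) := mul_le_mul_right hcu s
          _ = (s * v) * x := (mul_assoc ..).symm
  · rintro t ⟨a, ⟨b, hb, hab⟩, hta⟩
    exact ⟨b, hb, hta.trans hab⟩
  · rintro T hT hTq hTd hXT t ⟨a, ha, hta⟩
    refine hTd ⟨a, ?_, hta⟩
    rcases ha with ha | ⟨h1, h2⟩
    · exact hXT ha
    · refine hTq ⟨?_, ?_⟩
      · obtain ⟨u, hu, hau⟩ := h1
        obtain ⟨x, hx, v, -, rfl⟩ := Set.mem_mul.mp hu
        exact ⟨x * v, Set.mul_mem_mul (hXT hx) (Set.mem_univ v), hau⟩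
      · obtain ⟨u, hu, hau⟩ := h2
        obtain ⟨v, -, x, hx, rfl⟩ := Set.mem_mul.mp hu
        exact ⟨v * x, Set.mul_mem_mul (Set.mem_univ v) (hXT hx), hau⟩
end

section
/- Let S be an ordered semigroup. Suppose that X ∩ Q ∩ Y ⊆ (YQX] for every right ideal X, every left ideal Y, and every quasi-ideal Q of S. Then S is intra-regular. -/
open Pointwise

/-- Key step: if `a ≤ a*a*v` then `a` is intra-regular, since
`a ≤ a*a*v ≤ a*(a*a*v)*v = a*(a*a)*(v*v)`. -/
private lemma key_step {S : Type*} [Semigroup S] [PartialOrder S]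
    [CovariantClass S S (· * ·) (· ≤ ·)]
    [CovariantClass S S (Function.swap (· * ·)) (· ≤ ·)]
    {a v : S} (h : a ≤ a * a * v) : ∃ x y : S, a ≤ x * (a * a) * y := by
  refine ⟨a, v * v, ?_⟩
  calc a ≤ a * a * v := h
    _ ≤ a * (a * a * v) * v := mul_le_mul_left (mul_le_mul_right h a) v
    _ = a * (a * a) * (v * v) := by simp only [mul_assoc]

/-- If `X ∩ Q ∩ Y ⊆ (YQX]` for every right ideal X, left ideal Y and
quasi-ideal Q, then S is intra-regular. -/
theorem sufficient_condition_intra_regular {S : Type*} [Semigroup S] [PartialOrder S]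
    [CovariantClass S S (· * ·) (· ≤ ·)]
    [CovariantClass S S (Function.swap (· * ·)) (· ≤ ·)]
    (h : ∀ X Y Q : Set S,
      X.Nonempty → X * Set.univ ⊆ X → dcl X ⊆ X →
      Y.Nonempty → Set.univ * Y ⊆ Y → dcl Y ⊆ Y →
      Q.Nonempty → dcl (Q * Set.univ) ∩ dcl (Set.univ * Q) ⊆ Q → dcl Q ⊆ Q →
      X ∩ Q ∩ Y ⊆ dcl (Y * Q * X)) :
    ∀ a : S, ∃ x y : S, a ≤ x * (a * a) * y := by
  intro a
  set X : Set S := {t | t ≤ a ∨ ∃ s, t ≤ a * s} with hXdef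
  set Y : Set S := {t | t ≤ a ∨ ∃ s, t ≤ s * a} with hYdef
  set Q : Set S := {t | t ≤ a ∨ ∃ s s', t ≤ a * s ∧ t ≤ s' * a} with hQdef
  have hX1 : X.Nonempty := ⟨a, Or.inl le_rfl⟩
  have hX2 : X * Set.univ ⊆ X := by
    rintro t ⟨x, hx, s, -, rfl⟩
    rcases hx with hx | ⟨u, hu⟩
    · exact Or.inr ⟨s, mul_le_mul_left hx s⟩
    · exact Or.inr ⟨u * s, by rw [← mul_assoc]; exact mul_le_mul_left hu s⟩
  have hX3 : dcl X ⊆ X := by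
    rintro t ⟨b, hb, htb⟩
    rcases hb with hb | ⟨u, hu⟩
    · exact Or.inl (le_trans htb hb)
    · exact Or.inr ⟨u, le_trans htb hu⟩
  have hY1 : Y.Nonempty := ⟨a, Or.inl le_rfl⟩
  have hY2 : Set.univ * Y ⊆ Y := by
    rintro t ⟨s, -, y, hy, rfl⟩
    rcases hy with hy | ⟨u, hu⟩
    · exact Or.inr ⟨s, mul_le_mul_right hy s⟩
    · exact Or.inr ⟨s * u, by rw [mul_assoc]; exact mul_le_mul_right hu s⟩
  have hY3 : dcl Y ⊆ Y := by
    rintro t ⟨b, hb, htb⟩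
    rcases hb with hb | ⟨u, hu⟩
    · exact Or.inl (le_trans htb hb)
    · exact Or.inr ⟨u, le_trans htb hu⟩
  have hQ1 : Q.Nonempty := ⟨a, Or.inl le_rfl⟩
  have hQ2 : dcl (Q * Set.univ) ∩ dcl (Set.univ * Q) ⊆ Q := by
    rintro t ⟨⟨b, ⟨q, hq, s, -, rfl⟩, htb⟩, ⟨c, ⟨s', -, q', hq', rfl⟩, htc⟩⟩
    have h1 : ∃ w, t ≤ a * w := by
      rcases hq with hq | ⟨u, u', hu, -⟩
      · exact ⟨s, le_trans htb (mul_le_mul_left hq s)⟩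
      · exact ⟨u * s, le_trans htb (by rw [← mul_assoc]; exact mul_le_mul_left hu s)⟩
    have h2 : ∃ w, t ≤ w * a := by
      rcases hq' with hq' | ⟨u, u', -, hu'⟩
      · exact ⟨s', le_trans htc (mul_le_mul_right hq' s')⟩
      · exact ⟨s' * u', le_trans htc (by rw [mul_assoc]; exact mul_le_mul_right hu' s')⟩
    obtain ⟨w1, hw1⟩ := h1
    obtain ⟨w2, hw2⟩ := h2
    exact Or.inr ⟨w1, w2, hw1, hw2⟩
  have hQ3 : dcl Q ⊆ Q := by
    rintro t ⟨b, hb, htb⟩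
    rcases hb with hb | ⟨u, u', hu, hu'⟩
    · exact Or.inl (le_trans htb hb)
    · exact Or.inr ⟨u, u', le_trans htb hu, le_trans htb hu'⟩
  have ha : a ∈ dcl (Y * Q * X) :=
    h X Y Q hX1 hX2 hX3 hY1 hY2 hY3 hQ1 hQ2 hQ3
      ⟨⟨Or.inl le_rfl, Or.inl le_rfl⟩, Or.inl le_rfl⟩
  obtain ⟨b, ⟨c, ⟨y, hy, q, hq, rfl⟩, x, hx, rfl⟩, hab⟩ := ha
  -- hab : a ≤ y * q * x
  -- First reduce q: in all cases a ≤ y * a * z for some z.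
  have hz : ∃ z, a ≤ y * a * z := by
    rcases hq with hq | ⟨s₂, s₃, hq2, -⟩
    · exact ⟨x, le_trans hab (mul_le_mul_left (mul_le_mul_right hq y) x)⟩
    · refine ⟨s₂ * x, le_trans hab ?_⟩
      calc y * q * x ≤ y * (a * s₂) * x :=
            mul_le_mul_left (mul_le_mul_right hq2 y) x
        _ = y * a * (s₂ * x) := by simp only [mul_assoc]
  obtain ⟨z, hz⟩ := hz
  rcases hy with hy | ⟨s₁, hs₁⟩
  · -- y ≤ a : a ≤ a * a * z, use key_step
    exact key_step (le_trans hz (mul_le_mul_left (mul_le_mul_left hy a) z))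
  · -- y ≤ s₁ * a : a ≤ s₁ * (a * a) * z directly
    refine ⟨s₁, z, ?_⟩
    calc a ≤ y * a * z := hz
      _ ≤ s₁ * a * a * z := mul_le_mul_left (mul_le_mul_left hs₁ a) z
      _ = s₁ * (a * a) * z := by simp only [mul_assoc]
end

section
/- Let S be an intra-regular ordered semigroup. Then for every right ideal X, every left ideal Y, and every bi-ideal B of S, one has X ∩ B ∩ Y ⊆ (YBX]. -/
open Pointwise

/-- In an intra-regular ordered semigroup, `X ∩ B ∩ Y ⊆ (YBX]` for every
right ideal X, left ideal Y and bi-ideal B. -/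
theorem intra_regular_implies_bi {S : Type*} [Semigroup S] [PartialOrder S]
    [CovariantClass S S (· * ·) (· ≤ ·)]
    [CovariantClass S S (Function.swap (· * ·)) (· ≤ ·)]
    (hir : ∀ a : S, ∃ x y : S, a ≤ x * (a * a) * y)
    (X Y B : Set S)
    (hX : X.Nonempty) (hXr : X * Set.univ ⊆ X) (hXd : dcl X ⊆ X)
    (hY : Y.Nonempty) (hYl : Set.univ * Y ⊆ Y) (hYd : dcl Y ⊆ Y)
    (hB : B.Nonempty) (hBb : B * Set.univ * B ⊆ B) (hBd : dcl B ⊆ B) :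
    X ∩ B ∩ Y ⊆ dcl (Y * B * X) := by
  rintro a ⟨⟨haX, haB⟩, haY⟩
  obtain ⟨x, y, h⟩ := hir a
  have h2 : a ≤ (x * x * a) * ((a * (y * x)) * a) * (a * (y * y)) := by
    calc a ≤ x * (a * a) * y := h
    _ ≤ x * ((x * (a * a) * y) * (x * (a * a) * y)) * y :=
        mul_le_mul' (mul_le_mul' le_rfl (mul_le_mul' h h)) le_rfl
    _ = (x * x * a) * ((a * (y * x)) * a) * (a * (y * y)) := by
        simp only [mul_assoc]
  have hy' : x * x * a ∈ Y := hYl (Set.mul_mem_mul (Set.mem_univ _) haY)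
  have hb' : (a * (y * x)) * a ∈ B :=
    hBb (Set.mul_mem_mul (Set.mul_mem_mul haB (Set.mem_univ _)) haB)
  have hx' : a * (y * y) ∈ X := hXr (Set.mul_mem_mul haX (Set.mem_univ _))
  exact ⟨_, Set.mul_mem_mul (Set.mul_mem_mul hy' hb') hx', h2⟩
end

section
/- Let S be an ordered semigroup. The following are equivalent: (1) S is intra-regular; (2) for every right ideal X, every left ideal Y, and every bi-ideal B of S, X ∩ B ∩ Y ⊆ (YBX]; (3) for every right ideal X, every left ideal Y, and every quasi-ideal Q of S, X ∩ Q ∩ Y ⊆ (YQX]. -/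
open Pointwise

section Aux

variable {S : Type*} [Semigroup S] [PartialOrder S]
    [CovariantClass S S (· * ·) (· ≤ ·)]
    [CovariantClass S S (Function.swap (· * ·)) (· ≤ ·)]

private lemma boostR {a r : S} (h : a ≤ a * a * r) :
    ∃ x y : S, a ≤ x * (a * a) * y := by
  refine ⟨a, r * r, ?_⟩
  calc a ≤ a * a * r := h
    _ ≤ a * (a * a * r) * r := mul_le_mul_left (mul_le_mul_right h a) r
    _ = a * (a * a) * (r * r) := by simp only [mul_assoc]

private lemma IR_to_bi (hIR : ∀ a : S, ∃ x y : S, a ≤ x * (a * a) * y) :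
    ∀ X Y B : Set S,
      X.Nonempty → X * Set.univ ⊆ X → dcl X ⊆ X →
      Y.Nonempty → Set.univ * Y ⊆ Y → dcl Y ⊆ Y →
      B.Nonempty → B * Set.univ * B ⊆ B → dcl B ⊆ B →
      X ∩ B ∩ Y ⊆ dcl (Y * B * X) := by
  intro X Y B _ hXr _ _ hYl _ _ hBb _ a ha
  obtain ⟨⟨haX, haB⟩, haY⟩ := ha
  obtain ⟨x, y, h⟩ := hIR a
  set w := x * (a * a) * y with hw
  have hww : a * a ≤ w * w := mul_le_mul' h h
  have key : a ≤ (x * (x * a)) * (a * (y * x) * a) * (a * (y * y)) := by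
    calc a ≤ w := h
      _ ≤ x * (w * w) * y := mul_le_mul_left (mul_le_mul_right hww x) y
      _ = (x * (x * a)) * (a * (y * x) * a) * (a * (y * y)) := by
          rw [hw]; simp only [mul_assoc]
  have hy1 : x * (x * a) ∈ Y :=
    hYl (Set.mul_mem_mul trivial (hYl (Set.mul_mem_mul trivial haY)))
  have hb1 : a * (y * x) * a ∈ B :=
    hBb (Set.mul_mem_mul (Set.mul_mem_mul haB trivial) haB)
  have hx1 : a * (y * y) ∈ X := hXr (Set.mul_mem_mul haX trivial)
  exact ⟨_, Set.mul_mem_mul (Set.mul_mem_mul hy1 hb1) hx1, key⟩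

private lemma dcl_trans {A : Set S} : dcl (dcl A) ⊆ dcl A := by
  rintro t ⟨u, ⟨b, hb, hub⟩, htu⟩
  exact ⟨b, hb, htu.trans hub⟩

end Aux

/-- Theorem 1: intra-regularity is equivalent to the bi-ideal and to the
quasi-ideal conditions. -/
theorem intra_regular_tfae {S : Type*} [Semigroup S] [PartialOrder S]
    [CovariantClass S S (· * ·) (· ≤ ·)]
    [CovariantClass S S (Function.swap (· * ·)) (· ≤ ·)] :
    ((∀ a : S, ∃ x y : S, a ≤ x * (a * a) * y) ↔
      (∀ X Y B : Set S,
        X.Nonempty → X * Set.univ ⊆ X → dcl X ⊆ X →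
        Y.Nonempty → Set.univ * Y ⊆ Y → dcl Y ⊆ Y →
        B.Nonempty → B * Set.univ * B ⊆ B → dcl B ⊆ B →
        X ∩ B ∩ Y ⊆ dcl (Y * B * X))) ∧
    ((∀ a : S, ∃ x y : S, a ≤ x * (a * a) * y) ↔
      (∀ X Y Q : Set S,
        X.Nonempty → X * Set.univ ⊆ X → dcl X ⊆ X →
        Y.Nonempty → Set.univ * Y ⊆ Y → dcl Y ⊆ Y →
        Q.Nonempty → dcl (Q * Set.univ) ∩ dcl (Set.univ * Q) ⊆ Q → dcl Q ⊆ Q →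
        X ∩ Q ∩ Y ⊆ dcl (Y * Q * X))) := by
  -- (3) ⇒ (1)
  have h31 : (∀ X Y Q : Set S,
        X.Nonempty → X * Set.univ ⊆ X → dcl X ⊆ X →
        Y.Nonempty → Set.univ * Y ⊆ Y → dcl Y ⊆ Y →
        Q.Nonempty → dcl (Q * Set.univ) ∩ dcl (Set.univ * Q) ⊆ Q → dcl Q ⊆ Q →
        X ∩ Q ∩ Y ⊆ dcl (Y * Q * X)) →
      (∀ a : S, ∃ x y : S, a ≤ x * (a * a) * y) := by
    intro h3 a
    set X : Set S := dcl ({a} ∪ {a} * Set.univ) with hX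
    set Y : Set S := dcl ({a} ∪ Set.univ * {a}) with hY
    set Q : Set S := dcl {a} ∪ (dcl ({a} * Set.univ) ∩ dcl (Set.univ * {a}))
      with hQ
    have haX : a ∈ X := ⟨a, Or.inl rfl, le_rfl⟩
    have haY : a ∈ Y := ⟨a, Or.inl rfl, le_rfl⟩
    have haQ : a ∈ Q := Or.inl ⟨a, rfl, le_rfl⟩
    have hXr : X * Set.univ ⊆ X := by
      rintro z ⟨x, ⟨b, hb, hxb⟩, s, -, rfl⟩
      rcases hb with hb | ⟨a', ha', u, -, rfl⟩
      · exact ⟨a * s, Or.inr ⟨a, rfl, s, trivial, rfl⟩,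
          mul_le_mul_left (hxb.trans_eq hb) s⟩
      · obtain rfl := (Set.eq_of_mem_singleton ha').symm
        refine ⟨a * (u * s), Or.inr ⟨a, rfl, u * s, trivial, rfl⟩, ?_⟩
        calc x * s ≤ a * u * s := mul_le_mul_left hxb s
          _ = a * (u * s) := mul_assoc _ _ _
    have hYl : Set.univ * Y ⊆ Y := by
      rintro z ⟨s, -, y, ⟨b, hb, hyb⟩, rfl⟩
      rcases hb with hb | ⟨u, -, a', ha', rfl⟩
      · exact ⟨s * a, Or.inr ⟨s, trivial, a, rfl, rfl⟩,
          mul_le_mul_right (hyb.trans_eq hb) s⟩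
      · obtain rfl := (Set.eq_of_mem_singleton ha').symm
        refine ⟨s * u * a, Or.inr ⟨s * u, trivial, a, rfl, rfl⟩, ?_⟩
        calc s * y ≤ s * (u * a) := mul_le_mul_right hyb s
          _ = s * u * a := (mul_assoc _ _ _).symm
    have hQq : dcl (Q * Set.univ) ∩ dcl (Set.univ * Q) ⊆ Q := by
      rintro t ⟨⟨p, ⟨q, hq, s, -, rfl⟩, htp⟩, ⟨p', ⟨s', -, q', hq', rfl⟩, htp'⟩⟩
      refine Or.inr ⟨?_, ?_⟩
      · rcases hq with ⟨b, hb, hqb⟩ | ⟨⟨w, ⟨a', ha', u, -, rfl⟩, hqw⟩, -⟩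
        · exact ⟨a * s, ⟨a, rfl, s, trivial, rfl⟩,
            htp.trans (mul_le_mul_left (hqb.trans_eq hb) s)⟩
        · obtain rfl := (Set.eq_of_mem_singleton ha').symm
          refine ⟨a * (u * s), ⟨a, rfl, u * s, trivial, rfl⟩, ?_⟩
          calc t ≤ q * s := htp
            _ ≤ a * u * s := mul_le_mul_left hqw s
            _ = a * (u * s) := mul_assoc _ _ _
      · rcases hq' with ⟨b, hb, hqb⟩ | ⟨-, ⟨w, ⟨u, -, a', ha', rfl⟩, hqw⟩⟩
        · exact ⟨s' * a, ⟨s', trivial, a, rfl, rfl⟩,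
            htp'.trans (mul_le_mul_right (hqb.trans_eq hb) s')⟩
        · obtain rfl := (Set.eq_of_mem_singleton ha').symm
          refine ⟨s' * u * a, ⟨s' * u, trivial, a, rfl, rfl⟩, ?_⟩
          calc t ≤ s' * q' := htp'
            _ ≤ s' * (u * a) := mul_le_mul_right hqw s'
            _ = s' * u * a := (mul_assoc _ _ _).symm
    have hQd : dcl Q ⊆ Q := by
      rintro t ⟨q, hq, htq⟩
      rcases hq with ⟨b, hb, hqb⟩ | ⟨h1, h2⟩
      · exact Or.inl ⟨b, hb, htq.trans hqb⟩
      · exact Or.inr ⟨dcl_trans ⟨q, h1, htq⟩, dcl_trans ⟨q, h2, htq⟩⟩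
    have hmem : a ∈ dcl (Y * Q * X) :=
      h3 X Y Q ⟨a, haX⟩ hXr dcl_trans ⟨a, haY⟩ hYl dcl_trans
        ⟨a, haQ⟩ hQq hQd ⟨⟨haX, haQ⟩, haY⟩
    obtain ⟨p, ⟨yq, ⟨y0, hy0, q0, hq0, rfl⟩, x0, hx0, rfl⟩, hap⟩ := hmem
    -- unfold the membership data
    obtain ⟨by0, hby0, hy0le⟩ := hy0
    obtain ⟨bx0, hbx0, hx0le⟩ := hx0
    -- main inequality
    have key : ∀ {Y0 Q0 X0 : S}, y0 ≤ Y0 → q0 ≤ Q0 → x0 ≤ X0 →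
        a ≤ Y0 * Q0 * X0 := fun hy hq hx =>
      hap.trans (mul_le_mul' (mul_le_mul' hy hq) hx)
    -- case analysis on the bound for q0
    rcases hq0 with ⟨b, hb0, hq0le'⟩ | ⟨⟨w1, ⟨a1, ha1, s1, -, rfl⟩, hq1⟩,
        ⟨w2, ⟨s2, -, a2, ha2, rfl⟩, hq2⟩⟩
    · -- q0 ≤ a
      rcases hby0 with hb' | ⟨s, -, a', ha', rfl⟩
      · -- y0 ≤ a : a ≤ a * a * x0, boost
        have hq0le : q0 ≤ a := hq0le'.trans_eq hb0
        have : a ≤ a * a * x0 := key (hy0le.trans_eq hb') hq0le le_rfl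
        exact boostR this
      · obtain rfl := (Set.eq_of_mem_singleton ha').symm
        refine ⟨s, x0, ?_⟩
        calc a ≤ s * a * a * x0 := key hy0le (hq0le'.trans_eq hb0) le_rfl
          _ = s * (a * a) * x0 := by simp only [mul_assoc]
    · obtain rfl := (Set.eq_of_mem_singleton ha1).symm
      obtain rfl := (Set.eq_of_mem_singleton ha2).symm
      rcases hby0 with hb' | ⟨s, -, a', ha', rfl⟩
      · -- y0 ≤ a
        rcases hbx0 with hb'' | ⟨a', ha', t, -, rfl⟩
        · -- x0 ≤ a : a ≤ a * (a*s1) * a = a*a*(s1*a), boost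
          have : a ≤ a * a * (s1 * a) := by
            calc a ≤ a * (a * s1) * a :=
              key (hy0le.trans_eq hb') hq1 (hx0le.trans_eq hb'')
              _ = a * a * (s1 * a) := by simp only [mul_assoc]
          exact boostR this
        · obtain rfl := (Set.eq_of_mem_singleton ha').symm
          refine ⟨a * s2, t, ?_⟩
          calc a ≤ a * (s2 * a) * (a * t) :=
            key (hy0le.trans_eq hb') hq2 hx0le
            _ = a * s2 * (a * a) * t := by simp only [mul_assoc]
      · obtain rfl := (Set.eq_of_mem_singleton ha').symm
        refine ⟨s, s1 * x0, ?_⟩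
        calc a ≤ s * a * (a * s1) * x0 := key hy0le hq1 le_rfl
          _ = s * (a * a) * (s1 * x0) := by simp only [mul_assoc]
  -- (2) ⇒ (3)
  have h23 : (∀ X Y B : Set S,
        X.Nonempty → X * Set.univ ⊆ X → dcl X ⊆ X →
        Y.Nonempty → Set.univ * Y ⊆ Y → dcl Y ⊆ Y →
        B.Nonempty → B * Set.univ * B ⊆ B → dcl B ⊆ B →
        X ∩ B ∩ Y ⊆ dcl (Y * B * X)) →
      (∀ X Y Q : Set S,
        X.Nonempty → X * Set.univ ⊆ X → dcl X ⊆ X →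
        Y.Nonempty → Set.univ * Y ⊆ Y → dcl Y ⊆ Y →
        Q.Nonempty → dcl (Q * Set.univ) ∩ dcl (Set.univ * Q) ⊆ Q → dcl Q ⊆ Q →
        X ∩ Q ∩ Y ⊆ dcl (Y * Q * X)) := by
    intro h2 X Y Q hXne hXr hXd hYne hYl hYd hQne hQq hQd
    have hQb : Q * Set.univ * Q ⊆ Q := by
      rintro z ⟨p, ⟨q1, hq1, s, -, rfl⟩, q2, hq2, rfl⟩
      refine hQq ⟨⟨q1 * (s * q2), Set.mul_mem_mul hq1 trivial, ?_⟩,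
        ⟨q1 * s * q2, Set.mul_mem_mul trivial hq2, le_rfl⟩⟩
      exact le_of_eq (mul_assoc _ _ _)
    exact h2 X Y Q hXne hXr hXd hYne hYl hYd hQne hQb hQd
  constructor
  · exact ⟨IR_to_bi, fun h2 => h31 (h23 h2)⟩
  · exact ⟨fun h1 => h23 (IR_to_bi h1), h31⟩
end

section
/- Let S be an le-semigroup with greatest element e and let a ∈ S. Then q := a ∨ (ae ∧ ea) is the quasi-ideal element of S generated by a; that is, qe ∧ eq ≤ q, a ≤ q, and for every t ∈ S with te ∧ et ≤ t and a ≤ t, one has q ≤ t. -/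
/-- `a ∨ (ae ∧ ea)` is the quasi-ideal element generated by `a`. -/
theorem quasi_ideal_element_generated {S : Type*} [Semigroup S] [Lattice S]
    (e : S) (he : ∀ a : S, a ≤ e)
    (hld : ∀ a b c : S, a * (b ⊔ c) = a * b ⊔ a * c)
    (hrd : ∀ a b c : S, (a ⊔ b) * c = a * c ⊔ b * c)
    (a : S) (q : S) (hq : q = a ⊔ (a * e ⊓ e * a)) :
    q * e ⊓ e * q ≤ q ∧ a ≤ q ∧
    (∀ t : S, t * e ⊓ e * t ≤ t → a ≤ t → q ≤ t) := by
  have monoR : ∀ b c d : S, b ≤ c → b * d ≤ c * d := by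
    intro b c d h
    have : (b ⊔ c) * d = b * d ⊔ c * d := hrd b c d
    rw [sup_eq_right.mpr h] at this
    exact le_sup_left.trans this.ge
  have monoL : ∀ b c d : S, b ≤ c → d * b ≤ d * c := by
    intro b c d h
    have : d * (b ⊔ c) = d * b ⊔ d * c := hld d b c
    rw [sup_eq_right.mpr h] at this
    exact le_sup_left.trans this.ge
  have hqe : q * e ≤ a * e := by
    calc q * e ≤ (a ⊔ a * e) * e :=
          monoR _ _ _ (by rw [hq]; exact sup_le_sup_left inf_le_left _)
      _ = a * e ⊔ a * e * e := hrd a (a * e) e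
      _ ≤ a * e := sup_le le_rfl (by rw [mul_assoc]; exact monoL _ _ _ (he _))
  have heq : e * q ≤ e * a := by
    calc e * q ≤ e * (a ⊔ e * a) :=
          monoL _ _ _ (by rw [hq]; exact sup_le_sup_left inf_le_right _)
      _ = e * a ⊔ e * (e * a) := hld e a (e * a)
      _ ≤ e * a := sup_le le_rfl (by rw [← mul_assoc]; exact monoR _ _ _ (he _))
  refine ⟨?_, ?_, ?_⟩
  · exact le_trans (inf_le_inf hqe heq) (hq ▸ le_sup_right)
  · rw [hq]; exact le_sup_left
  · intro t ht hat
    rw [hq]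
    exact sup_le hat <| le_trans (inf_le_inf (monoR _ _ _ hat) (monoL _ _ _ hat)) ht
end

section
/- Let S be an intra-regular le-semigroup with greatest element e. Then for every right ideal element x, every left ideal element y, and every bi-ideal element b of S, one has x ∧ b ∧ y ≤ ybx. -/
/-- In an intra-regular le-semigroup, `x ∧ b ∧ y ≤ ybx` for every right ideal
element x, left ideal element y and bi-ideal element b. -/
theorem intra_regular_le_bi_ideal_element {S : Type*} [Semigroup S] [Lattice S]
    (e : S) (he : ∀ a : S, a ≤ e)
    (hld : ∀ a b c : S, a * (b ⊔ c) = a * b ⊔ a * c)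
    (hrd : ∀ a b c : S, (a ⊔ b) * c = a * c ⊔ b * c)
    (hir : ∀ a : S, a ≤ e * (a * a) * e)
    (x y b : S) (hx : x * e ≤ x) (hy : e * y ≤ y) (hb : b * e * b ≤ b) :
    x ⊓ b ⊓ y ≤ y * b * x := by
  set a := x ⊓ b ⊓ y with ha
  have hax : a ≤ x := le_trans inf_le_left inf_le_left
  have hab : a ≤ b := le_trans inf_le_left inf_le_right
  have hay : a ≤ y := inf_le_right
  have monol : ∀ c p q : S, p ≤ q → c * p ≤ c * q := by
    intro c p q h
    have h2 := hld c p q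
    rw [sup_eq_right.mpr h] at h2
    rw [h2]; exact le_sup_left
  have monor : ∀ c p q : S, p ≤ q → p * c ≤ q * c := by
    intro c p q h
    have h2 := hrd p q c
    rw [sup_eq_right.mpr h] at h2
    rw [h2]; exact le_sup_left
  have mul_le : ∀ p q r s : S, p ≤ q → r ≤ s → p * r ≤ q * s := by
    intro p q r s h1 h2
    exact le_trans (monor r p q h1) (monol q r s h2)
  have step1 : a ≤ e * (a * a) * e := hir a
  have step2 : a ≤ e * ((e * (a * a) * e) * (e * (a * a) * e)) * e :=
    le_trans step1 (mul_le _ _ _ _ (monol e _ _ (mul_le _ _ _ _ step1 step1)) le_rfl)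
  have eq1 : e * ((e * (a * a) * e) * (e * (a * a) * e)) * e
      = (e * e * a) * ((a * (e * e)) * a) * (a * (e * e)) := by
    simp only [mul_assoc]
  have h1 : e * e * a ≤ y :=
    le_trans (mul_le _ _ _ _ (he (e * e)) hay) hy
  have h3 : a * (e * e) ≤ x :=
    le_trans (mul_le _ _ _ _ hax (he (e * e))) hx
  have h2 : (a * (e * e)) * a ≤ b := by
    have : (a * (e * e)) * a ≤ (b * e) * b :=
      mul_le _ _ _ _ (mul_le _ _ _ _ hab (he (e * e))) hab
    exact le_trans this hb
  calc a ≤ e * ((e * (a * a) * e) * (e * (a * a) * e)) * e := step2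
    _ = (e * e * a) * ((a * (e * e)) * a) * (a * (e * e)) := eq1
    _ ≤ y * b * x := mul_le _ _ _ _ (mul_le _ _ _ _ h1 h2) h3
end

section
/- Let S be an le-semigroup with greatest element e. Suppose that x ∧ q ∧ y ≤ yqx for every right ideal element x, every left ideal element y, and every quasi-ideal element q of S. Then S is intra-regular, i.e., a ≤ ea²e for every a ∈ S. -/
/-- If `x ∧ q ∧ y ≤ yqx` for every right ideal element x, left ideal element y
and quasi-ideal element q of an le-semigroup, then S is intra-regular. -/
theorem le_quasi_condition_implies_intra_regular {S : Type*} [Semigroup S] [Lattice S]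
    (e : S) (he : ∀ a : S, a ≤ e)
    (hld : ∀ a b c : S, a * (b ⊔ c) = a * b ⊔ a * c)
    (hrd : ∀ a b c : S, (a ⊔ b) * c = a * c ⊔ b * c)
    (h : ∀ x y q : S, x * e ≤ x → e * y ≤ y → q * e ⊓ e * q ≤ q →
      x ⊓ q ⊓ y ≤ y * q * x) :
    ∀ a : S, a ≤ e * (a * a) * e := by
  -- monotonicity of multiplication
  have mr : ∀ {b c : S}, b ≤ c → ∀ d : S, b * d ≤ c * d := by
    intro b c hbc d
    have hc : c * d = b * d ⊔ c * d := by rw [← hrd, sup_eq_right.mpr hbc]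
    rw [hc]; exact le_sup_left
  have ml : ∀ {b c : S}, b ≤ c → ∀ d : S, d * b ≤ d * c := by
    intro b c hbc d
    have hc : d * c = d * b ⊔ d * c := by rw [← hld, sup_eq_right.mpr hbc]
    rw [hc]; exact le_sup_left
  intro a
  set x := a ⊔ a * e with hxdef
  set y := a ⊔ e * a with hydef
  set q := a ⊔ (a * e ⊓ e * a) with hqdef
  -- x is a right ideal element
  have hx : x * e ≤ x := by
    rw [hxdef, hrd]
    apply sup_le le_sup_right
    calc a * e * e = a * (e * e) := mul_assoc _ _ _
      _ ≤ a * e := ml (he _) a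
      _ ≤ x := le_sup_right
  -- y is a left ideal element
  have hy : e * y ≤ y := by
    rw [hydef, hld]
    apply sup_le le_sup_right
    calc e * (e * a) = e * e * a := (mul_assoc _ _ _).symm
      _ ≤ e * a := mr (he _) a
      _ ≤ y := le_sup_right
  -- q is a quasi-ideal element
  have hq : q * e ⊓ e * q ≤ q := by
    have h1 : q * e ≤ a * e := by
      rw [hqdef, hrd]
      apply sup_le le_rfl
      calc (a * e ⊓ e * a) * e ≤ a * e * e := mr inf_le_left e
        _ = a * (e * e) := mul_assoc _ _ _
        _ ≤ a * e := ml (he _) a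
    have h2 : e * q ≤ e * a := by
      rw [hqdef, hld]
      apply sup_le le_rfl
      calc e * (a * e ⊓ e * a) ≤ e * (e * a) := ml inf_le_right e
        _ = e * e * a := (mul_assoc _ _ _).symm
        _ ≤ e * a := mr (he _) a
    calc q * e ⊓ e * q ≤ a * e ⊓ e * a := inf_le_inf h1 h2
      _ ≤ q := le_sup_right
  -- the key inequality
  have key : a ≤ y * q * x :=
    le_trans (le_inf (le_inf le_sup_left le_sup_left) le_sup_left) (h x y q hx hy hq)
  -- y*q ≤ e*a
  have hyq : y * q ≤ e * a := by
    calc y * q ≤ e * q := mr (he y) q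
      _ = e * a ⊔ e * (a * e ⊓ e * a) := by rw [hqdef, hld]
      _ ≤ e * a ⊔ e * (e * a) := sup_le_sup_left (ml inf_le_right e) _
      _ = e * a ⊔ e * e * a := by rw [mul_assoc]
      _ ≤ e * a ⊔ e * a := sup_le_sup_left (mr (he _) a) _
      _ = e * a := sup_idem _
  -- q*x ≤ a*e
  have hqx : q * x ≤ a * e := by
    calc q * x ≤ q * e := ml (he x) q
      _ = a * e ⊔ (a * e ⊓ e * a) * e := by rw [hqdef, hrd]
      _ ≤ a * e ⊔ a * e * e := sup_le_sup_left (mr inf_le_left e) _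
      _ = a * e ⊔ a * (e * e) := by rw [mul_assoc]
      _ ≤ a * e ⊔ a * e := sup_le_sup_left (ml (he _) a) _
      _ = a * e := sup_idem _
  -- a ≤ e a² ⊔ e a² e
  have hA : a ≤ e * (a * a) ⊔ e * (a * a) * e := by
    calc a ≤ y * q * x := key
      _ ≤ e * a * x := mr hyq x
      _ = e * a * a ⊔ e * a * (a * e) := by rw [hxdef, hld]
      _ = e * (a * a) ⊔ e * (a * a) * e := by simp [mul_assoc]
  -- a ≤ a² e ⊔ e a² e
  have hB : a ≤ a * a * e ⊔ e * (a * a) * e := by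
    calc a ≤ y * q * x := key
      _ = y * (q * x) := mul_assoc _ _ _
      _ ≤ y * (a * e) := ml hqx y
      _ = a * (a * e) ⊔ e * a * (a * e) := by rw [hydef, hrd]
      _ = a * a * e ⊔ e * (a * a) * e := by simp [mul_assoc]
  -- e a² ≤ e a² e
  have hC : e * (a * a) ≤ e * (a * a) * e := by
    calc e * (a * a) = e * a * a := (mul_assoc _ _ _).symm
      _ ≤ e * a * (a * a * e ⊔ e * (a * a) * e) := ml hB (e * a)
      _ = e * a * (a * a * e) ⊔ e * a * (e * (a * a) * e) := hld _ _ _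
      _ ≤ e * (a * a) * e := by
          apply sup_le
          · calc e * a * (a * a * e) = e * (a * (a * a)) * e := by simp [mul_assoc]
              _ ≤ e * (e * (a * a)) * e := mr (ml (mr (he a) (a * a)) e) e
              _ = e * e * (a * a) * e := by simp [mul_assoc]
              _ ≤ e * (a * a) * e := mr (mr (he (e * e)) (a * a)) e
          · calc e * a * (e * (a * a) * e) ≤ e * (e * (a * a) * e) := mr (he _) _
              _ = e * e * (a * a) * e := by simp [mul_assoc]
              _ ≤ e * (a * a) * e := mr (mr (he (e * e)) (a * a)) e
  calc a ≤ e * (a * a) ⊔ e * (a * a) * e := hA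
    _ ≤ e * (a * a) * e := sup_le hC le_rfl
end

section
/- Let S be an le-semigroup with greatest element e. The following are equivalent: (1) S is intra-regular (a ≤ ea²e for all a ∈ S); (2) for every right ideal element x, every left ideal element y, and every bi-ideal element b of S, x ∧ b ∧ y ≤ ybx; (3) for every right ideal element x, every left ideal element y, and every quasi-ideal element q of S, x ∧ q ∧ y ≤ yqx. -/
set_option maxHeartbeats 2000000 in
/-- Theorem 2: in an le-semigroup, intra-regularity is equivalent to the
bi-ideal-element condition and to the quasi-ideal-element condition. -/
theorem le_intra_regular_tfae {S : Type*} [Semigroup S] [Lattice S]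
    (e : S) (he : ∀ a : S, a ≤ e)
    (hld : ∀ a b c : S, a * (b ⊔ c) = a * b ⊔ a * c)
    (hrd : ∀ a b c : S, (a ⊔ b) * c = a * c ⊔ b * c) :
    ((∀ a : S, a ≤ e * (a * a) * e) ↔
      (∀ x y b : S, x * e ≤ x → e * y ≤ y → b * e * b ≤ b →
        x ⊓ b ⊓ y ≤ y * b * x)) ∧
    ((∀ a : S, a ≤ e * (a * a) * e) ↔
      (∀ x y q : S, x * e ≤ x → e * y ≤ y → q * e ⊓ e * q ≤ q →
        x ⊓ q ⊓ y ≤ y * q * x)) := by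
  -- monotonicity of multiplication
  have mle : ∀ {a b c d : S}, a ≤ b → c ≤ d → a * c ≤ b * d := by
    intro a b c d h1 h2
    have l : a * c ≤ a * d := by
      have h := hld a c d
      rw [sup_eq_right.mpr h2] at h
      rw [h]; exact le_sup_left
    have r : a * d ≤ b * d := by
      have h := hrd a b d
      rw [sup_eq_right.mpr h1] at h
      rw [h]; exact le_sup_left
    exact l.trans r
  -- any word with a² inside is below e a² e
  have flank : ∀ p q a : S, p * ((a * a) * q) ≤ e * (a * a) * e := by
    intro p q a
    exact (mle (he p) (mle le_rfl (he q))).trans_eq (mul_assoc e (a*a) e).symm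
  -- distribution helpers
  have distR : ∀ {s : S} (w p q : S), w * p ≤ s → w * q ≤ s → w * (p ⊔ q) ≤ s := by
    intro s w p q h1 h2; rw [hld]; exact sup_le h1 h2
  have distM : ∀ {s : S} (w p q u : S), w * p * u ≤ s → w * q * u ≤ s → w * (p ⊔ q) * u ≤ s := by
    intro s w p q u h1 h2; rw [hld, hrd]; exact sup_le h1 h2
  have distL : ∀ {s : S} (p q r u : S), p * r * u ≤ s → q * r * u ≤ s → (p ⊔ q) * r * u ≤ s := by
    intro s p q r u h1 h2; rw [hrd, hrd]; exact sup_le h1 h2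
  -- core of the forward directions: a ≤ (e a)(a e a)(a e)
  have core : (∀ a : S, a ≤ e * (a * a) * e) →
      ∀ t : S, t ≤ ((e * t) * ((t * e) * t)) * (t * e) := by
    intro hi t
    calc t ≤ e * (t * t) * e := hi t
      _ ≤ e * ((e * (t * t) * e) * (e * (t * t) * e)) * e :=
          mle (mle le_rfl (mle (hi t) (hi t))) le_rfl
      _ = ((e * e) * t) * ((t * (e * e)) * t) * (t * (e * e)) := by simp only [mul_assoc]
      _ ≤ ((e * t) * ((t * e) * t)) * (t * e) :=
          mle (mle (mle (he _) le_rfl) (mle (mle le_rfl (he _)) le_rfl)) (mle le_rfl (he _))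
  constructor
  · constructor
    · -- intra-regular → bi-ideal condition
      intro hi x y b hx hy hb
      have htx : x ⊓ b ⊓ y ≤ x := le_trans inf_le_left inf_le_left
      have htb : x ⊓ b ⊓ y ≤ b := le_trans inf_le_left inf_le_right
      have hty : x ⊓ b ⊓ y ≤ y := inf_le_right
      have hA : e * (x ⊓ b ⊓ y) ≤ y := (mle le_rfl hty).trans hy
      have hB : ((x ⊓ b ⊓ y) * e) * (x ⊓ b ⊓ y) ≤ b :=
        (mle (mle htb le_rfl) htb).trans hb
      have hC : (x ⊓ b ⊓ y) * e ≤ x := (mle htx le_rfl).trans hx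
      exact (core hi _).trans (mle (mle hA hB) hC)
    · -- bi-ideal condition → intra-regular
      intro h a
      have hx : (a ⊔ a * e) * e ≤ a ⊔ a * e := by
        rw [hrd]
        exact sup_le le_sup_right
          (((mul_assoc a e e).trans_le (mle le_rfl (he _))).trans le_sup_right)
      have hy : e * (a ⊔ e * a) ≤ a ⊔ e * a := by
        rw [hld]
        exact sup_le le_sup_right
          (((mul_assoc e e a).symm.trans_le (mle (he _) le_rfl)).trans le_sup_right)
      have inner : ∀ w : S, a * (w * a) ≤ a ⊔ a * (e * a) :=
        fun w => (mle le_rfl (mle (he w) le_rfl)).trans le_sup_right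
      have hb : (a ⊔ a * (e * a)) * e * (a ⊔ a * (e * a)) ≤ a ⊔ a * (e * a) := by
        refine distL _ _ _ _ (distR _ _ _ ?_ ?_) (distR _ _ _ ?_ ?_)
        · exact (mul_assoc a e a).trans_le le_sup_right
        · calc a * e * (a * (e * a)) = a * ((e * (a * e)) * a) := by simp only [mul_assoc]
            _ ≤ _ := inner _
        · calc a * (e * a) * e * a = a * ((e * (a * e)) * a) := by simp only [mul_assoc]
            _ ≤ _ := inner _
        · calc a * (e * a) * e * (a * (e * a)) = a * ((e * (a * (e * (a * e)))) * a) := by simp only [mul_assoc]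
            _ ≤ _ := inner _
      have key : a ≤ (a ⊔ e * a) * (a ⊔ a * (e * a)) * (a ⊔ a * e) :=
        (le_inf (le_inf le_sup_left le_sup_left) le_sup_left).trans (h _ _ _ hx hy hb)
      have hMT : e * (a * a) * e ≤
          a * (a * a) ⊔ (a * (a * (e * (a * a))) ⊔ e * (a * a) * e) :=
        le_trans le_sup_right le_sup_right
      have h8 : (a ⊔ e * a) * (a ⊔ a * (e * a)) * (a ⊔ a * e) ≤
          a * (a * a) ⊔ (a * (a * (e * (a * a))) ⊔ e * (a * a) * e) := by
        refine distL _ _ _ _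
          (distM _ _ _ _ (distR _ _ _ ?_ ?_) (distR _ _ _ ?_ ?_))
          (distM _ _ _ _ (distR _ _ _ ?_ ?_) (distR _ _ _ ?_ ?_))
        · calc a * a * a = a * (a * a) := by simp only [mul_assoc]
            _ ≤ _ := le_sup_left
        · calc a * a * (a * e) = a * ((a * a) * e) := by simp only [mul_assoc]
            _ ≤ _ := (flank a e a).trans hMT
        · calc a * (a * (e * a)) * a = a * (a * (e * (a * a))) := by simp only [mul_assoc]
            _ ≤ _ := le_trans le_sup_left le_sup_right
        · calc a * (a * (e * a)) * (a * e) = (a * (a * e)) * ((a * a) * e) := by simp only [mul_assoc]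
            _ ≤ _ := (flank (a * (a * e)) e a).trans hMT
        · calc e * a * a * a = e * ((a * a) * a) := by simp only [mul_assoc]
            _ ≤ _ := (flank e a a).trans hMT
        · calc e * a * a * (a * e) = e * ((a * a) * (a * e)) := by simp only [mul_assoc]
            _ ≤ _ := (flank e (a * e) a).trans hMT
        · calc e * a * (a * (e * a)) * a = e * ((a * a) * (e * (a * a))) := by simp only [mul_assoc]
            _ ≤ _ := (flank e (e * (a * a)) a).trans hMT
        · calc e * a * (a * (e * a)) * (a * e) = e * ((a * a) * (e * (a * (a * e)))) := by simp only [mul_assoc]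
            _ ≤ _ := (flank e (e * (a * (a * e))) a).trans hMT
      have hT : a ≤ a * (a * a) ⊔ (a * (a * (e * (a * a))) ⊔ e * (a * a) * e) :=
        key.trans h8
      have hB1 : a * (a * a) ≤ e * (a * a) * e := by
        have step : a * (a * a) ≤
            a * ((a * (a * a) ⊔ (a * (a * (e * (a * a))) ⊔ e * (a * a) * e)) * a) :=
          mle le_rfl (mle hT le_rfl)
        refine step.trans ?_
        rw [hrd, hrd, hld, hld]
        refine sup_le ?_ (sup_le ?_ ?_)
        · calc a * ((a * (a * a)) * a) = a * ((a * a) * (a * a)) := by simp only [mul_assoc]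
            _ ≤ _ := flank a (a * a) a
        · calc a * ((a * (a * (e * (a * a)))) * a)
              = a * ((a * a) * (e * (a * (a * a)))) := by simp only [mul_assoc]
            _ ≤ _ := flank a (e * (a * (a * a))) a
        · calc a * ((e * (a * a) * e) * a) = (a * e) * ((a * a) * (e * a)) := by simp only [mul_assoc]
            _ ≤ _ := flank (a * e) (e * a) a
      have hB2 : a * (a * (e * (a * a))) ≤ e * (a * a) * e := by
        have step : a * (a * (e * (a * a))) ≤
            (a * (a * a) ⊔ (a * (a * (e * (a * a))) ⊔ e * (a * a) * e)) * (a * (e * (a * a))) :=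
          mle hT le_rfl
        refine step.trans ?_
        rw [hrd, hrd]
        refine sup_le ?_ (sup_le ?_ ?_)
        · calc (a * (a * a)) * (a * (e * (a * a)))
              = a * ((a * a) * (a * (e * (a * a)))) := by simp only [mul_assoc]
            _ ≤ _ := flank a (a * (e * (a * a))) a
        · calc (a * (a * (e * (a * a)))) * (a * (e * (a * a)))
              = (a * (a * e)) * ((a * a) * (a * (e * (a * a)))) := by simp only [mul_assoc]
            _ ≤ _ := flank (a * (a * e)) (a * (e * (a * a))) a
        · calc (e * (a * a) * e) * (a * (e * (a * a)))
              = e * ((a * a) * (e * (a * (e * (a * a))))) := by simp only [mul_assoc]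
            _ ≤ _ := flank e (e * (a * (e * (a * a)))) a
      exact hT.trans (sup_le hB1 (sup_le hB2 le_rfl))
  · constructor
    · -- intra-regular → quasi-ideal condition
      intro hi x y q hx hy hq
      have htx : x ⊓ q ⊓ y ≤ x := le_trans inf_le_left inf_le_left
      have htq : x ⊓ q ⊓ y ≤ q := le_trans inf_le_left inf_le_right
      have hty : x ⊓ q ⊓ y ≤ y := inf_le_right
      have hA : e * (x ⊓ q ⊓ y) ≤ y := (mle le_rfl hty).trans hy
      have hB : ((x ⊓ q ⊓ y) * e) * (x ⊓ q ⊓ y) ≤ q := by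
        have h1 : ((x ⊓ q ⊓ y) * e) * (x ⊓ q ⊓ y) ≤ q * e :=
          (mul_assoc _ e _).trans_le (mle htq (he _))
        have h2 : ((x ⊓ q ⊓ y) * e) * (x ⊓ q ⊓ y) ≤ e * q := mle (he _) htq
        exact (le_inf h1 h2).trans hq
      have hC : (x ⊓ q ⊓ y) * e ≤ x := (mle htx le_rfl).trans hx
      exact (core hi _).trans (mle (mle hA hB) hC)
    · -- quasi-ideal condition → intra-regular
      intro h a
      have hx : (a ⊔ a * e) * e ≤ a ⊔ a * e := by
        rw [hrd]
        exact sup_le le_sup_right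
          (((mul_assoc a e e).trans_le (mle le_rfl (he _))).trans le_sup_right)
      have hy : e * (a ⊔ e * a) ≤ a ⊔ e * a := by
        rw [hld]
        exact sup_le le_sup_right
          (((mul_assoc e e a).symm.trans_le (mle (he _) le_rfl)).trans le_sup_right)
      have hq : (a ⊔ (a * e ⊓ e * a)) * e ⊓ e * (a ⊔ (a * e ⊓ e * a)) ≤
          a ⊔ (a * e ⊓ e * a) := by
        have h1 : (a ⊔ (a * e ⊓ e * a)) * e ≤ a * e := by
          rw [hrd]
          exact sup_le le_rfl
            ((mle inf_le_left le_rfl).trans ((mul_assoc a e e).trans_le (mle le_rfl (he _))))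
        have h2 : e * (a ⊔ (a * e ⊓ e * a)) ≤ e * a := by
          rw [hld]
          exact sup_le le_rfl
            ((mle le_rfl inf_le_right).trans ((mul_assoc e e a).symm.trans_le (mle (he _) le_rfl)))
        exact (inf_le_inf h1 h2).trans le_sup_right
      have key : a ≤ (a ⊔ e * a) * (a ⊔ (a * e ⊓ e * a)) * (a ⊔ a * e) :=
        (le_inf (le_inf le_sup_left le_sup_left) le_sup_left).trans (h _ _ _ hx hy hq)
      have key2 : (a ⊔ e * a) * (a ⊔ (a * e ⊓ e * a)) * (a ⊔ a * e) ≤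
          (a ⊔ e * a) * (a ⊔ a * e) * (a ⊔ a * e) :=
        mle (mle le_rfl (sup_le le_sup_left (inf_le_left.trans le_sup_right))) le_rfl
      -- T' := B1 ⊔ (B3 ⊔ (B4 ⊔ M))
      have hMT : e * (a * a) * e ≤
          a * (a * a) ⊔ (a * (a * (e * a)) ⊔ (a * (a * (e * (a * e))) ⊔ e * (a * a) * e)) :=
        le_trans le_sup_right (le_trans le_sup_right le_sup_right)
      have h8 : (a ⊔ e * a) * (a ⊔ a * e) * (a ⊔ a * e) ≤
          a * (a * a) ⊔ (a * (a * (e * a)) ⊔ (a * (a * (e * (a * e))) ⊔ e * (a * a) * e)) := by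
        refine distL _ _ _ _
          (distM _ _ _ _ (distR _ _ _ ?_ ?_) (distR _ _ _ ?_ ?_))
          (distM _ _ _ _ (distR _ _ _ ?_ ?_) (distR _ _ _ ?_ ?_))
        · calc a * a * a = a * (a * a) := by simp only [mul_assoc]
            _ ≤ _ := le_sup_left
        · calc a * a * (a * e) = a * ((a * a) * e) := by simp only [mul_assoc]
            _ ≤ _ := (flank a e a).trans hMT
        · calc a * (a * e) * a = a * (a * (e * a)) := by simp only [mul_assoc]
            _ ≤ _ := le_trans le_sup_left le_sup_right
        · calc a * (a * e) * (a * e) = a * (a * (e * (a * e))) := by simp only [mul_assoc]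
            _ ≤ _ := le_trans (le_trans le_sup_left le_sup_right) le_sup_right
        · calc e * a * a * a = e * ((a * a) * a) := by simp only [mul_assoc]
            _ ≤ _ := (flank e a a).trans hMT
        · calc e * a * a * (a * e) = e * ((a * a) * (a * e)) := by simp only [mul_assoc]
            _ ≤ _ := (flank e (a * e) a).trans hMT
        · calc e * a * (a * e) * a = e * ((a * a) * (e * a)) := by simp only [mul_assoc]
            _ ≤ _ := (flank e (e * a) a).trans hMT
        · calc e * a * (a * e) * (a * e) = e * ((a * a) * (e * (a * e))) := by simp only [mul_assoc]
            _ ≤ _ := (flank e (e * (a * e)) a).trans hMT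
      have hT : a ≤
          a * (a * a) ⊔ (a * (a * (e * a)) ⊔ (a * (a * (e * (a * e))) ⊔ e * (a * a) * e)) :=
        key.trans (key2.trans h8)
      have hB3 : a * (a * (e * a)) ≤ e * (a * a) * e := by
        have step : a * (a * (e * a)) ≤ a * (a * (e *
            (a * (a * a) ⊔ (a * (a * (e * a)) ⊔ (a * (a * (e * (a * e))) ⊔ e * (a * a) * e))))) :=
          mle le_rfl (mle le_rfl (mle le_rfl hT))
        refine step.trans ?_
        simp only [hld]
        refine sup_le ?_ (sup_le ?_ (sup_le ?_ ?_))
        · calc a * (a * (e * (a * (a * a)))) = (a * (a * e)) * ((a * a) * a) := by simp only [mul_assoc]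
            _ ≤ _ := flank (a * (a * e)) a a
        · calc a * (a * (e * (a * (a * (e * a)))))
              = (a * (a * e)) * ((a * a) * (e * a)) := by simp only [mul_assoc]
            _ ≤ _ := flank (a * (a * e)) (e * a) a
        · calc a * (a * (e * (a * (a * (e * (a * e))))))
              = (a * (a * e)) * ((a * a) * (e * (a * e))) := by simp only [mul_assoc]
            _ ≤ _ := flank (a * (a * e)) (e * (a * e)) a
        · calc a * (a * (e * (e * (a * a) * e)))
              = (a * (a * (e * e))) * ((a * a) * e) := by simp only [mul_assoc]
            _ ≤ _ := flank (a * (a * (e * e))) e a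
      have hB4 : a * (a * (e * (a * e))) ≤ e * (a * a) * e := by
        calc a * (a * (e * (a * e))) = (a * (a * (e * a))) * e := by simp only [mul_assoc]
          _ ≤ (e * (a * a) * e) * e := mle hB3 le_rfl
          _ = e * ((a * a) * (e * e)) := by simp only [mul_assoc]
          _ ≤ _ := flank e (e * e) a
      have hB1 : a * (a * a) ≤ e * (a * a) * e := by
        have step : a * (a * a) ≤ a * ((a * (a * a) ⊔ (a * (a * (e * a)) ⊔
            (a * (a * (e * (a * e))) ⊔ e * (a * a) * e))) * a) :=
          mle le_rfl (mle hT le_rfl)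
        refine step.trans ?_
        rw [hrd, hrd, hrd, hld, hld, hld]
        refine sup_le ?_ (sup_le ?_ (sup_le ?_ ?_))
        · calc a * ((a * (a * a)) * a) = a * ((a * a) * (a * a)) := by simp only [mul_assoc]
            _ ≤ _ := flank a (a * a) a
        · calc a * ((a * (a * (e * a))) * a)
              = a * ((a * a) * (e * (a * a))) := by simp only [mul_assoc]
            _ ≤ _ := flank a (e * (a * a)) a
        · calc a * ((a * (a * (e * (a * e)))) * a)
              = a * ((a * a) * (e * (a * (e * a)))) := by simp only [mul_assoc]
            _ ≤ _ := flank a (e * (a * (e * a))) a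
        · calc a * ((e * (a * a) * e) * a) = (a * e) * ((a * a) * (e * a)) := by simp only [mul_assoc]
            _ ≤ _ := flank (a * e) (e * a) a
      exact hT.trans (sup_le hB1 (sup_le hB3 (sup_le hB4 le_rfl)))
end

section
/- Let S be a poe-semigroup with greatest element e which is intra-regular (a ≤ ea²e for all a ∈ S). Let x be a right ideal element (xe ≤ x), y a left ideal element (ey ≤ y), and b a bi-ideal element (beb ≤ b) of S, and suppose that m ∈ S is a greatest lower bound of the set {x, b, y}. Then m ≤ ybx. -/
/-- In an intra-regular poe-semigroup, if the greatest lower bound `m` of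
`{x, b, y}` exists for a right ideal element x, a left ideal element y and a
bi-ideal element b, then `m ≤ ybx`. -/
theorem poe_intra_regular_glb {S : Type*} [Semigroup S] [PartialOrder S]
    [CovariantClass S S (· * ·) (· ≤ ·)]
    [CovariantClass S S (Function.swap (· * ·)) (· ≤ ·)]
    (e : S) (he : ∀ a : S, a ≤ e)
    (hir : ∀ a : S, a ≤ e * (a * a) * e)
    (x y b : S) (hx : x * e ≤ x) (hy : e * y ≤ y) (hb : b * e * b ≤ b)
    (m : S) (hm : IsGLB {x, b, y} m) :
    m ≤ y * b * x := by
  have hmx : m ≤ x := hm.1 (by simp)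
  have hmb : m ≤ b := hm.1 (by simp)
  have hmy : m ≤ y := hm.1 (by simp)
  have h1 : m ≤ e * (m * m) * e := hir m
  have h2 : m ≤ e * ((e * (m * m) * e) * (e * (m * m) * e)) * e :=
    h1.trans (mul_le_mul' (mul_le_mul' le_rfl (mul_le_mul' h1 h1)) le_rfl)
  have heq : e * ((e * (m * m) * e) * (e * (m * m) * e)) * e
      = (e * e * m) * (m * (e * e) * m) * (m * (e * e)) := by
    simp only [mul_assoc]
  have hA : e * e * m ≤ y := by
    calc e * e * m ≤ e * e * y := mul_le_mul' le_rfl hmy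
    _ = e * (e * y) := by rw [mul_assoc]
    _ ≤ e * y := mul_le_mul' le_rfl hy
    _ ≤ y := hy
  have hB : m * (e * e) * m ≤ b := by
    calc m * (e * e) * m ≤ b * (e * e) * b :=
          mul_le_mul' (mul_le_mul' hmb le_rfl) hmb
    _ ≤ b * e * b := mul_le_mul' (mul_le_mul' le_rfl (he (e * e))) le_rfl
    _ ≤ b := hb
  have hC : m * (e * e) ≤ x := by
    calc m * (e * e) ≤ x * (e * e) := mul_le_mul' hmx le_rfl
    _ = x * e * e := by rw [mul_assoc]
    _ ≤ x * e := mul_le_mul' hx le_rfl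
    _ ≤ x := hx
  calc m ≤ _ := h2
  _ = _ := heq
  _ ≤ y * b * x := mul_le_mul' (mul_le_mul' hA hB) hC
end
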